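/- Let w : ℝ → ℝ³ be twice differentiable with a := w′, b := w″, w(t) ≠ 0 and 𝛘_a(t) ≠ 0 for all t, where ŵ := w/|w|, α_a := (ŵ·a)/|w|, 𝛘_a := (ŵ×a)/|w|, 𝛘̂_a := 𝛘_a/|𝛘_a|, and 𝛘_b := (ŵ×b)/|w|. Then, with d_b := −(𝛘̂_a·𝛘_b), the magnitude |𝛘_a| is differentiable and satisfies d|𝛘_a|/dt = −2α_a |𝛘_a| − d_b. -/

import Mathlib

open Matrix

/-- Euclidean magnitude of a vector in ℝ³. -/
noncomputable def mag (v : Fin 3 → ℝ) : ℝ := Real.sqrt (v ⬝ᵥ v)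

/-- The unit tangent vector `ŵ := w/|w|` of a curve `w : ℝ → ℝ³`. -/
noncomputable def uhat (w : ℝ → Fin 3 → ℝ) (t : ℝ) : Fin 3 → ℝ := (mag (w t))⁻¹ • w t

/-- The growth rate `α_a := (ŵ·a)/|w|`, where `a := w′`. -/
noncomputable def alphaA (w : ℝ → Fin 3 → ℝ) (t : ℝ) : ℝ :=
  (uhat w t ⬝ᵥ deriv w t) / mag (w t)

/-- The swing rate `𝛘_a := (ŵ×a)/|w|`, where `a := w′`. -/
noncomputable def chiA (w : ℝ → Fin 3 → ℝ) (t : ℝ) : Fin 3 → ℝ :=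
  (mag (w t))⁻¹ • (uhat w t ⨯₃ deriv w t)

/-- `α_b := (ŵ·b)/|w|`, where `b := w″`. -/
noncomputable def alphaB (w : ℝ → Fin 3 → ℝ) (t : ℝ) : ℝ :=
  (uhat w t ⬝ᵥ deriv (deriv w) t) / mag (w t)

/-- `𝛘_b := (ŵ×b)/|w|`, where `b := w″`. -/
noncomputable def chiB (w : ℝ → Fin 3 → ℝ) (t : ℝ) : Fin 3 → ℝ :=
  (mag (w t))⁻¹ • (uhat w t ⨯₃ deriv (deriv w) t)

/-- The unit vector `𝛘̂_a := 𝛘_a/|𝛘_a|`. -/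
noncomputable def chiAhat (w : ℝ → Fin 3 → ℝ) (t : ℝ) : Fin 3 → ℝ :=
  (mag (chiA w t))⁻¹ • chiA w t

/-- The scalar `c_b := ŵ·(𝛘̂_a×𝛘_b)`. -/
noncomputable def cB (w : ℝ → Fin 3 → ℝ) (t : ℝ) : ℝ :=
  uhat w t ⬝ᵥ (chiAhat w t ⨯₃ chiB w t)

/-- The scalar `d_b := −(𝛘̂_a·𝛘_b)`. -/
noncomputable def dB (w : ℝ → Fin 3 → ℝ) (t : ℝ) : ℝ :=
  -(chiAhat w t ⬝ᵥ chiB w t)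

/-- The Darboux angular velocity vector `𝒟 := 𝛘_a + (c_b/|𝛘_a|) ŵ`. -/
noncomputable def darboux (w : ℝ → Fin 3 → ℝ) (t : ℝ) : Fin 3 → ℝ :=
  chiA w t + (cB w t / mag (chiA w t)) • uhat w t

private lemma hasDerivAt_dot3 {f g : ℝ → Fin 3 → ℝ} {f' g' : Fin 3 → ℝ} {t : ℝ}
    (hf : HasDerivAt f f' t) (hg : HasDerivAt g g' t) :
    HasDerivAt (fun s => f s ⬝ᵥ g s) (f' ⬝ᵥ g t + f t ⬝ᵥ g') t := by
  have hf' := hasDerivAt_pi.1 hf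
  have hg' := hasDerivAt_pi.1 hg
  have h := (((hf' 0).mul (hg' 0)).add ((hf' 1).mul (hg' 1))).add ((hf' 2).mul (hg' 2))
  simp only [dotProduct, Fin.sum_univ_three]
  refine h.congr_deriv ?_
  ring

private lemma hasDerivAt_cross3 {f g : ℝ → Fin 3 → ℝ} {f' g' : Fin 3 → ℝ} {t : ℝ}
    (hf : HasDerivAt f f' t) (hg : HasDerivAt g g' t) :
    HasDerivAt (fun s => f s ⨯₃ g s) (f' ⨯₃ g t + f t ⨯₃ g') t := by
  have hf' := hasDerivAt_pi.1 hf
  have hg' := hasDerivAt_pi.1 hg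
  rw [hasDerivAt_pi]
  intro i
  fin_cases i
  · have h := ((hf' 1).mul (hg' 2)).sub ((hf' 2).mul (hg' 1))
    simp [cross_apply]
    refine h.congr_deriv ?_
    ring
  · have h := ((hf' 2).mul (hg' 0)).sub ((hf' 0).mul (hg' 2))
    simp [cross_apply]
    refine h.congr_deriv ?_
    ring
  · have h := ((hf' 0).mul (hg' 1)).sub ((hf' 1).mul (hg' 0))
    simp [cross_apply]
    refine h.congr_deriv ?_
    ring


/-- For a twice differentiable curve `w : ℝ → ℝ³` with `w(t) ≠ 0` and `𝛘_a(t) ≠ 0`,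
the magnitude of the swing rate satisfies `d|𝛘_a|/dt = −2α_a |𝛘_a| − d_b`. -/
theorem deriv_mag_chiA (w : ℝ → Fin 3 → ℝ)
    (hd : Differentiable ℝ w) (hd' : Differentiable ℝ (deriv w))
    (hw : ∀ t, w t ≠ 0) (hchi : ∀ t, chiA w t ≠ 0) (t : ℝ) :
    HasDerivAt (fun s => mag (chiA w s))
      (-2 * alphaA w t * mag (chiA w t) - dB w t) t := by
  set a := deriv w with ha_def
  set b := deriv a with hb_def
  have haD : ∀ s, HasDerivAt w (a s) s := fun s => (hd s).hasDerivAt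
  have hbD : ∀ s, HasDerivAt a (b s) s := fun s => (hd' s).hasDerivAt
  set u : ℝ → Fin 3 → ℝ := fun s => w s ⨯₃ a s with hu_def
  set n : ℝ → ℝ := fun s => w s ⬝ᵥ w s with hn_def
  set m : ℝ → ℝ := fun s => u s ⬝ᵥ u s with hm_def
  have hn_pos : ∀ s, 0 < n s := by
    intro s
    have h0 : 0 ≤ n s := Finset.sum_nonneg fun i _ => mul_self_nonneg _
    rcases h0.lt_or_eq with h | h
    · exact h
    · exact absurd (dotProduct_self_eq_zero.1 h.symm) (hw s)
  have hmagw : ∀ s, mag (w s) = Real.sqrt (n s) := fun s => rfl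
  have key : ∀ s (v : Fin 3 → ℝ),
      (mag (w s))⁻¹ • (uhat w s ⨯₃ v) = (n s)⁻¹ • (w s ⨯₃ v) := by
    intro s v
    rw [uhat, LinearMap.map_smul₂, smul_smul]
    congr 1
    rw [hmagw, ← mul_inv, Real.mul_self_sqrt (hn_pos s).le]
  have hchiA : ∀ s, chiA w s = (n s)⁻¹ • u s := fun s => key s (a s)
  have hchiB : chiB w t = (n t)⁻¹ • (w t ⨯₃ b t) := key t (b t)
  have hu_ne : u t ≠ 0 := by
    intro h
    exact hchi t (by rw [hchiA t, h, smul_zero])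
  have hm_pos : 0 < m t := by
    have h0 : 0 ≤ m t := Finset.sum_nonneg fun i _ => mul_self_nonneg _
    rcases h0.lt_or_eq with h | h
    · exact h
    · exact absurd (dotProduct_self_eq_zero.1 h.symm) hu_ne
  have hmagchi : ∀ s, mag (chiA w s) = Real.sqrt (m s) / n s := by
    intro s
    rw [hchiA s, mag, smul_dotProduct, dotProduct_smul, smul_eq_mul, smul_eq_mul,
      ← mul_assoc, Real.sqrt_mul (mul_self_nonneg _) (m s),
      Real.sqrt_mul_self (inv_nonneg.2 (hn_pos s).le), inv_mul_eq_div]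
  -- derivatives
  have hnD : HasDerivAt n (2 * (w t ⬝ᵥ a t)) t := by
    have h := hasDerivAt_dot3 (haD t) (haD t)
    convert h using 1
    rw [dotProduct_comm]
    ring
  have huD : HasDerivAt u (w t ⨯₃ b t) t := by
    have h := hasDerivAt_cross3 (haD t) (hbD t)
    simpa [cross_self] using h
  have hmD : HasDerivAt m (2 * (u t ⬝ᵥ (w t ⨯₃ b t))) t := by
    have h := hasDerivAt_dot3 huD huD
    convert h using 1
    rw [dotProduct_comm]
    ring
  have hS_pos : 0 < Real.sqrt (m t) := Real.sqrt_pos.2 hm_pos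
  have hsD := hmD.sqrt hm_pos.ne'
  have hfD := hsD.div hnD (hn_pos t).ne'
  -- rewrite scalars
  have halpha : alphaA w t = (w t ⬝ᵥ a t) / n t := by
    rw [alphaA, uhat, ← ha_def, smul_dotProduct, smul_eq_mul, hmagw]
    have hs := Real.mul_self_sqrt (hn_pos t).le
    rw [inv_mul_eq_div, div_div, hs]
  have hdB : dB w t = -((u t ⬝ᵥ (w t ⨯₃ b t)) / (Real.sqrt (m t) * n t)) := by
    rw [dB, chiAhat, hmagchi t, hchiA t, hchiB, smul_smul, smul_dotProduct,
      dotProduct_smul, smul_eq_mul, smul_eq_mul]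
    have h1 : n t ≠ 0 := (hn_pos t).ne'
    have h2 : Real.sqrt (m t) ≠ 0 := hS_pos.ne'
    field_simp
  simp only [hmagchi]
  rw [halpha, hdB]
  refine hfD.congr_deriv ?_
  have h1 : n t ≠ 0 := (hn_pos t).ne'
  have h2 : Real.sqrt (m t) ≠ 0 := hS_pos.ne'
  field_simp
  ring
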